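/- Let H be a finite-dimensional Hopf algebra and K ⊆ H a left coideal subalgebra (Δ(K) ⊆ H ⊗ K), regarded as a left H-comodule algebra via Δ. Let K̄ = H/S⁻¹(K⁺)H where K⁺ = K ∩ ker ε. Then the Yan–Zhu stabilizer St_K(k) of the trivial one-dimensional K-module, identified with a subalgebra of H*, equals K̄* = {α ∈ H* : α(S⁻¹(x)h) = 0 for all x ∈ K⁺, h ∈ H}, i.e., α ∈ St_K(k) if and only if α vanishes on S⁻¹(K⁺)H. -/
import Mathlib


open TensorProduct

/-- For a left coideal subalgebra `K ⊆ H`, the Yan–Zhu stabilizer of the trivial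
`K`-module (identified with a subspace of `H*` via `End(k) ≅ k`) consists exactly of
the functionals vanishing on `S⁻¹(K⁺)H`. -/
theorem stmt19 {k H : Type*} [Field k] [Ring H] [HopfAlgebra k H] [FiniteDimensional k H]
    (Sinv : H →ₗ[k] H)
    (hS1 : ∀ x, Sinv ((HopfAlgebra.antipode (R := k) : H →ₗ[k] H) x) = x)
    (hS2 : ∀ x, (HopfAlgebra.antipode (R := k) : H →ₗ[k] H) (Sinv x) = x)
    -- `K` is a left coideal subalgebra of `H`
    (K : Subalgebra k H)
    (hK : ∀ x ∈ K, Coalgebra.comul (R := k) x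
      ∈ LinearMap.range (LinearMap.lTensor H (K.toSubmodule).subtype)) :
    ∀ α : Module.Dual k H,
      -- `α` satisfies the stabilizer condition for the trivial `K`-module
      (∀ x ∈ K, ∀ t : H, Coalgebra.counit (R := k) x * α t = α (Sinv x * t))
        ↔ -- `α` vanishes on `S⁻¹(K⁺)H`
          (∀ x ∈ K, Coalgebra.counit (R := k) x = 0 → ∀ h : H, α (Sinv x * h) = 0) := by
  intro α
  have hanti1 : (HopfAlgebra.antipode (R := k) : H →ₗ[k] H) 1 = 1 := by
    have := HopfAlgebra.mul_antipode_rTensor_comul_apply (R := k) (1 : H)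
    simpa [Bialgebra.comul_one, Algebra.TensorProduct.one_def, LinearMap.rTensor_tmul, LinearMap.mul'_apply] using this
  have hSinv1 : Sinv (1 : H) = 1 := by
    have := hS1 (1 : H)
    rwa [hanti1] at this
  constructor
  · intro hst x hx hε h
    rw [← hst x hx h, hε, zero_mul]
  · intro hv x hx t
    set y : H := x - (Coalgebra.counit (R := k) x) • 1 with hy
    have hyK : y ∈ K := sub_mem hx (SMulMemClass.smul_mem _ (one_mem K))
    have hεy : Coalgebra.counit (R := k) y = 0 := by
      simp [hy, map_sub, map_smul, Bialgebra.counit_one]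
    have := hv y hyK hεy t
    rw [hy, map_sub, map_smul, hSinv1, sub_mul, smul_mul_assoc, one_mul,
      map_sub, map_smul, sub_eq_zero] at this
    rw [this, smul_eq_mul]
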